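/- For every finite abelian group G there exist D_0 ∈ ℕ and k_0 ∈ ℕ such that D_k(G) = D_0 + k·exp(G) for all k ≥ k_0. In other words, the sequence (D_k(G) − k·exp(G))_{k∈ℕ} is eventually constant. -/

import Mathlib

open Multiset

/-- A nonempty zero-sum sequence (multiset) over `G`. -/
def IsZeroSumSeq {G : Type*} [AddCommGroup G] (S : Multiset G) : Prop :=
  S ≠ 0 ∧ S.sum = 0

/-- A minimal zero-sum sequence: nonempty, zero-sum, and with no proper
nonempty zero-sum subsequence. -/
def IsMinZeroSum {G : Type*} [AddCommGroup G] (S : Multiset G) : Prop :=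
  S ≠ 0 ∧ S.sum = 0 ∧ ∀ T : Multiset G, T ≤ S → T ≠ 0 → T.sum = 0 → T = S

/-- `ζ` is a factorization of `B` into minimal zero-sum sequences. -/
def IsFactorization {G : Type*} [AddCommGroup G] (ζ : Multiset (Multiset G))
    (B : Multiset G) : Prop :=
  ζ.sum = B ∧ ∀ A ∈ ζ, IsMinZeroSum A

/-- The set of lengths `L(B)` of factorizations of `B` into minimal zero-sum
sequences. -/
def lengthSet {G : Type*} [AddCommGroup G] (B : Multiset G) : Set ℕ :=
  { n | ∃ ζ : Multiset (Multiset G), IsFactorization ζ B ∧ Multiset.card ζ = n }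

/-- `max L(B)`, the maximal length of a factorization of `B` into minimal
zero-sum sequences. -/
noncomputable def maxL {G : Type*} [AddCommGroup G] (B : Multiset G) : ℕ :=
  sSup (lengthSet B)

/-- `S` contains `k` disjoint nonempty zero-sum subsequences. -/
def HasKDisjointZeroSum {G : Type*} [AddCommGroup G] (k : ℕ) (S : Multiset G) : Prop :=
  ∃ T : Multiset (Multiset G), Multiset.card T = k ∧
    (∀ A ∈ T, IsZeroSumSeq A) ∧ T.sum ≤ S

/-- The `k`-wise Davenport constant: the smallest `ℓ` such that every sequence
over `G` of length at least `ℓ` has `k` disjoint nonempty zero-sum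
subsequences. -/
noncomputable def Dk (G : Type*) [AddCommGroup G] (k : ℕ) : ℕ :=
  sInf { ℓ : ℕ | ∀ S : Multiset G, ℓ ≤ Multiset.card S → HasKDisjointZeroSum k S }

/-- `s_{≤ k}(G)` as an extended natural number: the smallest `m` such that every
sequence over `G` of length at least `m` has a nonempty zero-sum subsequence of
length at most `k`. -/
noncomputable def sLE (G : Type*) [AddCommGroup G] (k : ℕ) : ℕ∞ :=
  sInf { m : ℕ∞ | ∀ S : Multiset G, m ≤ (Multiset.card S : ℕ∞) →
    ∃ T ≤ S, T ≠ 0 ∧ T.sum = 0 ∧ Multiset.card T ≤ k }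

/-- `s_{≤ k}(G)` as a natural number (used when it is known to be finite). -/
noncomputable def sleN (G : Type*) [AddCommGroup G] (k : ℕ) : ℕ :=
  sInf { m : ℕ | ∀ S : Multiset G, m ≤ Multiset.card S →
    ∃ T ≤ S, T ≠ 0 ∧ T.sum = 0 ∧ Multiset.card T ≤ k }

/-- `η(G) = s_{≤ exp(G)}(G)`. -/
noncomputable def etaC (G : Type*) [AddCommGroup G] : ℕ :=
  sleN G (AddMonoid.exponent G)

lemma aux_card_sum {G : Type*} (T : Multiset (Multiset G)) :
    Multiset.card T.sum = (T.map Multiset.card).sum := by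
  induction T using Multiset.induction with
  | empty => simp
  | cons a s ih => simp [ih]

section AuxLemmas

variable {G : Type*} [AddCommGroup G] [Fintype G]

lemma aux_exists_short_zero_sum (S : Multiset G)
    (h : (AddMonoid.exponent G - 1) * Fintype.card G + 1 ≤ Multiset.card S) :
    ∃ T ≤ S, T ≠ 0 ∧ T.sum = 0 ∧ Multiset.card T ≤ AddMonoid.exponent G := by
  classical
  have epos : 0 < AddMonoid.exponent G :=
    Nat.pos_of_ne_zero AddMonoid.exponent_ne_zero_of_finite
  obtain ⟨g, hg⟩ : ∃ g : G, AddMonoid.exponent G ≤ S.count g := by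
    by_contra hc
    push_neg at hc
    have hb : Multiset.card S ≤ S.toFinset.card * (AddMonoid.exponent G - 1) := by
      rw [← Multiset.toFinset_sum_count_eq S]
      exact Finset.sum_le_card_nsmul _ _ _ (fun a _ => by have := hc a; omega)
    have hb2 : S.toFinset.card ≤ Fintype.card G := Finset.card_le_univ _
    have : Multiset.card S ≤ Fintype.card G * (AddMonoid.exponent G - 1) :=
      hb.trans (Nat.mul_le_mul_right _ hb2)
    have := Nat.mul_comm (AddMonoid.exponent G - 1) (Fintype.card G)
    omega
  have hord : addOrderOf g ≤ AddMonoid.exponent G :=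
    Nat.le_of_dvd epos (AddMonoid.addOrder_dvd_exponent g)
  have hordpos : 0 < addOrderOf g := addOrderOf_pos g
  refine ⟨Multiset.replicate (addOrderOf g) g, ?_, ?_, ?_, ?_⟩
  · exact Multiset.le_count_iff_replicate_le.mp (hord.trans hg)
  · exact Multiset.card_pos.mp (by simpa using hordpos)
  · rw [Multiset.sum_replicate]
    exact addOrderOf_nsmul_eq_zero g
  · simpa using hord

lemma aux_hasK_of_long (k : ℕ) (S : Multiset G)
    (h : k * ((AddMonoid.exponent G - 1) * Fintype.card G + 1) ≤ Multiset.card S) :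
    HasKDisjointZeroSum k S := by
  classical
  induction k generalizing S with
  | zero => exact ⟨0, by simp, by simp, Multiset.zero_le S⟩
  | succ k ih =>
    set M := (AddMonoid.exponent G - 1) * Fintype.card G + 1 with hM
    have hMS : M ≤ Multiset.card S := le_trans (Nat.le_mul_of_pos_left M k.succ_pos) h
    obtain ⟨T, hTS, hTne, hTsum, hTcard⟩ := aux_exists_short_zero_sum S hMS
    have hGpos : 0 < Fintype.card G := Fintype.card_pos
    have heM : AddMonoid.exponent G ≤ M := by
      have : AddMonoid.exponent G - 1 ≤ (AddMonoid.exponent G - 1) * Fintype.card G :=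
        Nat.le_mul_of_pos_right _ hGpos
      omega
    have hrest : k * M ≤ Multiset.card (S - T) := by
      rw [Multiset.card_sub hTS]
      have h' : (k + 1) * M = k * M + M := by ring
      omega
    obtain ⟨U, hUcard, hUzs, hUle⟩ := ih (S - T) hrest
    refine ⟨T ::ₘ U, by simp [hUcard], ?_, ?_⟩
    · intro A hA
      rcases Multiset.mem_cons.mp hA with rfl | hA
      · exact ⟨hTne, hTsum⟩
      · exact hUzs A hA
    · rw [Multiset.sum_cons]
      calc T + U.sum ≤ T + (S - T) := add_le_add_right hUle T
        _ = S := by rw [add_comm]; exact tsub_add_cancel_of_le hTS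

lemma aux_hasK_mem (k : ℕ) :
    (k * ((AddMonoid.exponent G - 1) * Fintype.card G + 1)) ∈
      { ℓ : ℕ | ∀ S : Multiset G, ℓ ≤ Multiset.card S → HasKDisjointZeroSum k S } :=
  fun S hS => aux_hasK_of_long k S hS

lemma aux_dk_mem (k : ℕ) :
    Dk G k ∈ { ℓ : ℕ | ∀ S : Multiset G, ℓ ≤ Multiset.card S → HasKDisjointZeroSum k S } :=
  Nat.sInf_mem ⟨_, aux_hasK_mem k⟩

lemma aux_dk_lower (k : ℕ) : k * AddMonoid.exponent G ≤ Dk G k := by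
  classical
  apply le_csInf ⟨_, aux_hasK_mem k⟩
  intro ℓ hℓ
  obtain ⟨g, hg⟩ := AddMonoid.exists_addOrderOf_eq_exponent
    (AddMonoid.ExponentExists.of_finite (G := G))
  obtain ⟨T, hTcard, hTzs, hTle⟩ := hℓ (Multiset.replicate ℓ g) (by simp)
  have hA : ∀ A ∈ T, AddMonoid.exponent G ≤ Multiset.card A := by
    intro A hAT
    obtain ⟨T', rfl⟩ := Multiset.exists_cons_of_mem hAT
    have hAle : A ≤ Multiset.replicate ℓ g := by
      refine le_trans ?_ hTle
      rw [Multiset.sum_cons]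
      exact le_add_right A T'.sum
    have hmem : ∀ b ∈ A, b = g := fun b hb =>
      Multiset.eq_of_mem_replicate (Multiset.mem_of_le hAle hb)
    have hrep : A = Multiset.replicate (Multiset.card A) g :=
      Multiset.eq_replicate_card.mpr hmem
    obtain ⟨hAne, hAsum⟩ := hTzs A (Multiset.mem_cons_self A T')
    have hsum : (Multiset.card A) • g = 0 := by
      rw [← Multiset.sum_replicate, ← hrep]; exact hAsum
    have hdvd : addOrderOf g ∣ Multiset.card A := addOrderOf_dvd_of_nsmul_eq_zero hsum
    rw [hg] at hdvd
    have hpos : 0 < Multiset.card A := Multiset.card_pos.mpr hAne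
    exact Nat.le_of_dvd hpos hdvd
  have h1 : Multiset.card T • AddMonoid.exponent G ≤ (T.map Multiset.card).sum := by
    have := Multiset.card_nsmul_le_sum (s := T.map Multiset.card)
      (a := AddMonoid.exponent G) ?_
    · simpa using this
    · intro x hx
      obtain ⟨A, hAT, rfl⟩ := Multiset.mem_map.mp hx
      exact hA A hAT
  have h2 : (T.map Multiset.card).sum = Multiset.card T.sum := (aux_card_sum T).symm
  have h3 : Multiset.card T.sum ≤ ℓ := by
    simpa using Multiset.card_le_card hTle
  rw [hTcard] at h1
  simp only [smul_eq_mul] at h1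
  omega

lemma aux_dk_step (k : ℕ) :
    Dk G (k + 1) ≤
      max (Dk G k + AddMonoid.exponent G) ((AddMonoid.exponent G - 1) * Fintype.card G + 1) := by
  classical
  apply Nat.sInf_le
  intro S hS
  have hM : (AddMonoid.exponent G - 1) * Fintype.card G + 1 ≤ Multiset.card S :=
    le_trans (le_max_right _ _) hS
  obtain ⟨T, hTS, hTne, hTsum, hTcard⟩ := aux_exists_short_zero_sum S hM
  have h1 : Dk G k ≤ Multiset.card (S - T) := by
    rw [Multiset.card_sub hTS]
    have := le_trans (le_max_left _ _) hS
    omega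
  obtain ⟨U, hUcard, hUzs, hUle⟩ := aux_dk_mem k (S - T) h1
  refine ⟨T ::ₘ U, by simp [hUcard], ?_, ?_⟩
  · intro A hA
    rcases Multiset.mem_cons.mp hA with rfl | hA
    · exact ⟨hTne, hTsum⟩
    · exact hUzs A hA
  · rw [Multiset.sum_cons]
    calc T + U.sum ≤ T + (S - T) := add_le_add_right hUle T
      _ = S := by rw [add_comm]; exact tsub_add_cancel_of_le hTS

end AuxLemmas

theorem statement10 {G : Type*} [AddCommGroup G] [Fintype G] :
    ∃ D₀ k₀ : ℕ, ∀ k : ℕ, k₀ ≤ k → Dk G k = D₀ + k * AddMonoid.exponent G := by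
  classical
  set e := AddMonoid.exponent G with he
  set M := (e - 1) * Fintype.card G + 1 with hMdef
  have epos : 0 < e := Nat.pos_of_ne_zero AddMonoid.exponent_ne_zero_of_finite
  set f : ℕ → ℕ := fun k => Dk G k - k * e with hf
  have lower : ∀ k, k * e ≤ Dk G k := fun k => aux_dk_lower k
  have step : ∀ k, M ≤ k → f (k + 1) ≤ f k := by
    intro k hk
    have hstep := aux_dk_step (G := G) k
    have hke : k ≤ k * e := Nat.le_mul_of_pos_right k epos
    have hMk : M ≤ Dk G k + e := by
      have := lower k; omega
    have hmax : max (Dk G k + e) M = Dk G k + e := max_eq_left hMk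
    rw [hmax] at hstep
    have hl1 := lower k
    have hl2 := lower (k + 1)
    simp only [hf]
    have : (k + 1) * e = k * e + e := by ring
    omega
  have chain : ∀ d k, M ≤ k → f (k + d) ≤ f k := by
    intro d
    induction d with
    | zero => intro k _; simp
    | succ d ih =>
      intro k hk
      have h1 : f (k + d + 1) ≤ f (k + d) := step (k + d) (by omega)
      have h2 := ih k hk
      have : k + (d + 1) = k + d + 1 := by ring
      rw [this]
      exact h1.trans h2
  -- the set of values of f at indices ≥ M
  set V : Set ℕ := {n | ∃ k, M ≤ k ∧ f k = n} with hV
  have hVne : V.Nonempty := ⟨f M, M, le_refl M, rfl⟩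
  have hmem := Nat.sInf_mem hVne
  obtain ⟨k₀, hk₀M, hk₀⟩ := hmem
  refine ⟨sInf V, k₀, ?_⟩
  intro k hk
  have h1 : f k ≤ sInf V := by
    rw [← hk₀]
    have : k = k₀ + (k - k₀) := by omega
    rw [this]
    exact chain (k - k₀) k₀ hk₀M
  have h2 : sInf V ≤ f k := Nat.sInf_le ⟨k, by omega, rfl⟩
  have h3 : f k = sInf V := le_antisymm h1 h2
  have h4 := lower k
  simp only [hf] at h3
  omega
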